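/- Let q = 2^ℓ and let s, t divide q−1. Define e(s, t) to be the number of pairs (i, j) with 0 ≤ i < s, 0 ≤ j < t such that there exist m, n ∈ {0,…,q−1} with m ≡ i (mod s), n ≡ j (mod t), and n ≤₂ m. Then the F_q-vector space of bivariate polynomials of degree at most q−1 in each variable whose restriction to every line L(T) = (T, αT + β), α ∈ G_s, β ∈ G_t, has degree < q−1, has dimension at least q² − e(s, t). -/

import Mathlib

open scoped Classical
open Polynomial

/-- `Shadow2 n m` : every bit set in `n` is also set in `m` (i.e. `n ≤₂ m`). -/
def Shadow2 (n m : ℕ) : Prop := ∀ i, n.testBit i = true → m.testBit i = true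

/-- `e s t q`: the number of pairs `(i,j) ∈ [s] × [t]` for which there exist
`m, n ∈ [q]` with `m ≡ i (mod s)`, `n ≡ j (mod t)` and `n ≤₂ m`. -/
noncomputable def eST (s t q : ℕ) : ℕ :=
  ((Finset.range s ×ˢ Finset.range t).filter
    (fun p => ∃ m < q, ∃ n < q, m % s = p.1 ∧ n % t = p.2 ∧ Shadow2 n m)).card

noncomputable def EsetST (s t q : ℕ) : Finset (ℕ × ℕ) :=
  (Finset.range s ×ˢ Finset.range t).filter
    (fun p => ∃ m < q, ∃ n < q, m % s = p.1 ∧ n % t = p.2 ∧ Shadow2 n m)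



lemma Shadow2.and_eq {k n : ℕ} (h : Shadow2 k n) : k &&& n = k := by
  apply Nat.eq_of_testBit_eq; intro i
  simp only [Nat.testBit_and]
  cases hk : k.testBit i
  · simp
  · simp [h i hk]

lemma Shadow2.le {k n : ℕ} (h : Shadow2 k n) : k ≤ n := by
  have := Nat.and_le_right (n := k) (m := n)
  rwa [h.and_eq] at this

lemma shadow2_zero (n : ℕ) : Shadow2 0 n := by intro i hi; simp at hi

private lemma add_eq_xor_aux : ∀ N a b : ℕ, a + b ≤ N → a &&& b = 0 → a + b = a ^^^ b := by
  intro N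
  induction N with
  | zero =>
    intro a b h _
    have ha : a = 0 := by omega
    have hb : b = 0 := by omega
    subst ha; subst hb; simp
  | succ N ih =>
    intro a b hab h
    rcases Nat.eq_zero_or_pos (a + b) with h0 | hpos
    · have ha : a = 0 := by omega
      have hb : b = 0 := by omega
      subst ha; subst hb; simp
    · have hdiv : a / 2 &&& b / 2 = 0 := by
        apply Nat.eq_of_testBit_eq; intro i
        have hI := congrArg (fun x => Nat.testBit x (i + 1)) h
        simpa [Nat.testBit_and, Nat.testBit_div_two] using hI
      have hbit0 : ¬(a % 2 = 1 ∧ b % 2 = 1) := by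
        rintro ⟨h1, h2⟩
        have hI := congrArg (fun x => Nat.testBit x 0) h
        simp [Nat.testBit_and, Nat.testBit_zero, h1, h2] at hI
      have hxd : (a ^^^ b) / 2 = a / 2 ^^^ b / 2 := by
        apply Nat.eq_of_testBit_eq; intro i
        simp [Nat.testBit_div_two, Nat.testBit_xor]
      have hxm : (a ^^^ b) % 2 = (a + b) % 2 := Nat.xor_mod_two_eq
      have hrec : a / 2 + b / 2 = a / 2 ^^^ b / 2 := ih _ _ (by omega) hdiv
      omega

lemma add_eq_xor_of_and_eq_zero {a b : ℕ} (h : a &&& b = 0) : a + b = a ^^^ b :=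
  add_eq_xor_aux (a + b) a b le_rfl h

lemma Shadow2.sub_eq_xor {k n : ℕ} (h : Shadow2 k n) : n - k = n ^^^ k := by
  have hd : k &&& (n ^^^ k) = 0 := by
    apply Nat.eq_of_testBit_eq; intro i
    simp only [Nat.testBit_and, Nat.testBit_xor, Nat.zero_testBit]
    cases hk : k.testBit i
    · simp
    · simp [h i hk]
  have h1 : k + (n ^^^ k) = k ^^^ (n ^^^ k) := add_eq_xor_of_and_eq_zero hd
  have h2 : k ^^^ (n ^^^ k) = n := by
    rw [Nat.xor_comm n k, xor_cancel_left]
  omega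

lemma shadow2_two_pow_sub_one {n ℓ : ℕ} (h : n < 2 ^ ℓ) : Shadow2 n (2 ^ ℓ - 1) := by
  intro i hi
  have hiℓ : i < ℓ := by
    by_contra h'
    have : n < 2 ^ i := lt_of_lt_of_le h (Nat.pow_le_pow_right (by norm_num) (by omega))
    rw [Nat.testBit_lt_two_pow this] at hi
    exact Bool.false_ne_true hi
  simp [Nat.testBit_two_pow_sub_one, hiℓ]

lemma shadow2_sub_compl {k n ℓ : ℕ} (hk : Shadow2 k n) (hn : n < 2 ^ ℓ) :
    Shadow2 (n - k) (2 ^ ℓ - 1 - k) := by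
  have hkℓ : k < 2 ^ ℓ := lt_of_le_of_lt hk.le hn
  rw [hk.sub_eq_xor, (shadow2_two_pow_sub_one hkℓ).sub_eq_xor]
  intro i hi
  simp only [Nat.testBit_xor] at hi ⊢
  cases hkb : k.testBit i with
  | true => simp [hkb, hk i hkb] at hi
  | false =>
    simp only [hkb, Bool.xor_false] at hi ⊢
    have : i < ℓ := by
      by_contra h'
      have : n < 2 ^ i := lt_of_lt_of_le hn (Nat.pow_le_pow_right (by norm_num) (by omega))
      rw [Nat.testBit_lt_two_pow this] at hi
      exact Bool.false_ne_true hi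
    simp [Nat.testBit_two_pow_sub_one, this]

lemma choose_mod_two (n k : ℕ) :
    n.choose k % 2 = if Shadow2 k n then 1 else 0 := by
  set a := max n k + 1 with ha
  have hn : n < 2 ^ a := lt_of_lt_of_le (Nat.lt_two_pow_self (n := n)) (Nat.pow_le_pow_right (by norm_num) (by omega))
  have hk : k < 2 ^ a := lt_of_lt_of_le (Nat.lt_two_pow_self (n := k)) (Nat.pow_le_pow_right (by norm_num) (by omega))
  have hlucas := Choose.choose_modEq_prod_range_choose_nat (p := 2) hn hk
  split_ifs with hsh
  · have hprod : (∏ i ∈ Finset.range a, (n / 2 ^ i % 2).choose (k / 2 ^ i % 2)) = 1 := by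
      apply Finset.prod_eq_one
      intro i _
      have h2 : k / 2 ^ i % 2 = 0 ∨ k / 2 ^ i % 2 = 1 := by omega
      rcases h2 with h2 | h2
      · simp [h2]
      · have hbk : k.testBit i = true := by
          simp [Nat.testBit_eq_decide_div_mod_eq, h2]
        have hbn := hsh i hbk
        rw [Nat.testBit_eq_decide_div_mod_eq] at hbn
        have : n / 2 ^ i % 2 = 1 := by simpa using hbn
        simp [h2, this]
    rw [hprod] at hlucas
    simpa [Nat.ModEq] using hlucas
  · simp only [Shadow2, not_forall] at hsh
    obtain ⟨i, hbk, hbn⟩ := hsh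
    rw [Bool.not_eq_true] at hbn
    have hbk' : k.testBit i = true := by
      by_contra h'
      exact h' hbk  -- hbk : testBit = true as hypothesis of implication? fix below
    have hia : i < a := by
      have h2i : 2 ^ i ≤ k := Nat.ge_two_pow_of_testBit hbk'
      have := lt_of_le_of_lt h2i hk
      exact (Nat.pow_lt_pow_iff_right (by norm_num)).mp this
    have hprod : (∏ i ∈ Finset.range a, (n / 2 ^ i % 2).choose (k / 2 ^ i % 2)) = 0 := by
      apply Finset.prod_eq_zero (Finset.mem_range.mpr hia)
      rw [Nat.testBit_eq_decide_div_mod_eq] at hbk' hbn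
      have h1 : k / 2 ^ i % 2 = 1 := by simpa using hbk'
      have h0 : n / 2 ^ i % 2 = 0 := by
        have := of_decide_eq_false hbn
        omega
      simp [h1, h0]
    rw [hprod] at hlucas
    simpa [Nat.ModEq] using hlucas

lemma cast_choose_char_two {F : Type*} [Ring F] [CharP F 2] (n k : ℕ) :
    ((n.choose k : ℕ) : F) = if Shadow2 k n then 1 else 0 := by
  have h := choose_mod_two n k
  have hdm : n.choose k = 2 * (n.choose k / 2) + n.choose k % 2 := by omega
  rw [hdm]
  push_cast
  rw [show ((2 : F)) = 0 by exact_mod_cast CharP.cast_eq_zero F 2, h]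
  split_ifs <;> simp

section
variable {F : Type*} [Field F] [Fintype F] [CharP F 2] {q : ℕ}

lemma sum_pow_boundary (hF : Fintype.card F = q) (hq2 : 2 ≤ q) :
    ∑ x : F, x ^ (q - 1) = 1 := by
  have hx : ∀ x : F, x ^ (q - 1) = if x = 0 then 0 else 1 := by
    intro x
    split_ifs with h
    · subst h; exact zero_pow (by omega)
    · rw [← hF]; exact FiniteField.pow_card_sub_one_eq_one x h
  rw [Finset.sum_congr rfl fun x _ => hx x, Finset.sum_ite, Finset.sum_const, Finset.sum_const]
  have hcard : (Finset.univ.filter (fun x : F => ¬x = 0)).card = q - 1 := by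
    have : (Finset.univ.filter (fun x : F => ¬x = 0)) = Finset.univ.erase 0 := by
      ext x; simp [Finset.mem_erase, and_comm]
    rw [this, Finset.card_erase_of_mem (Finset.mem_univ 0), Finset.card_univ, hF]
  rw [hcard]
  have hq0 : ((q : ℕ) : F) = 0 := by rw [← hF]; exact FiniteField.cast_card_eq_zero F
  have : ((q - 1 : ℕ) : F) = 1 := by
    rw [Nat.cast_sub (by omega), hq0]
    simp [CharTwo.neg_eq]
  simp [this]

lemma sum_pow_lt (hF : Fintype.card F = q) (hq2 : 2 ≤ q) (e : ℕ) (he : e < q) :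
    ∑ x : F, x ^ e = if e = q - 1 then 1 else 0 := by
  split_ifs with h
  · subst h; exact sum_pow_boundary hF hq2
  · rcases Nat.eq_zero_or_pos e with h0 | h0
    · subst h0
      simp only [pow_zero, Finset.sum_const, Finset.card_univ, hF]
      rw [nsmul_eq_mul, mul_one, ← hF, FiniteField.cast_card_eq_zero]
    · exact FiniteField.sum_pow_lt_card_sub_one F e (by omega)

lemma sum_pow_full (hF : Fintype.card F = q) (hq2 : 2 ≤ q) (e : ℕ) (he : e ≤ 2 * (q - 1)) :
    ∑ x : F, x ^ e = if e = q - 1 ∨ e = 2 * (q - 1) then 1 else 0 := by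
  rcases le_or_gt e (q - 1) with hle | hgt
  · have := sum_pow_lt hF hq2 e (by omega)
    rw [this]
    congr 1
    simp only [eq_iff_iff]
    omega
  · set e' := e - (q - 1) with he'
    have he'1 : 1 ≤ e' := by omega
    have he'2 : e' ≤ q - 1 := by omega
    have hpt : ∀ x : F, x ^ e = x ^ e' := by
      intro x
      by_cases hx : x = 0
      · subst hx; rw [zero_pow (by omega), zero_pow (by omega)]
      · have : e = (q - 1) + e' := by omega
        rw [this, pow_add, ← hF, FiniteField.pow_card_sub_one_eq_one x hx, one_mul]
    rw [Finset.sum_congr rfl fun x _ => hpt x, sum_pow_lt hF hq2 e' (by omega)]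
    congr 1
    simp only [eq_iff_iff]
    omega

end

lemma S_eval {F : Type*} [Field F] [Fintype F] [CharP F 2] {q s t : ℕ}
    (hF : Fintype.card F = q) (hq2 : 2 ≤ q) (hs : s ∣ q - 1) (ht : t ∣ q - 1)
    (α β : F) (hα : α ^ s = 1) (hβ : β ^ t = 1)
    (m n : ℕ) (hm : m < q) (hn : n < q) :
    ∑ x : F, x ^ m * (α * x + β) ^ n =
      if Shadow2 (q - 1 - m) n ∧ ¬(m = q - 1 ∧ n = q - 1) then
        α ^ (q - 1 - m) * β ^ (n - (q - 1 - m)) else 0 := by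
  have hαq : α ^ (q - 1) = 1 := by
    obtain ⟨cs, hcs⟩ := hs; rw [hcs, pow_mul, hα, one_pow]
  have hβq : β ^ (q - 1) = 1 := by
    obtain ⟨ct, hct⟩ := ht; rw [hct, pow_mul, hβ, one_pow]
  have hexp : ∀ x : F, x ^ m * (α * x + β) ^ n =
      ∑ k ∈ Finset.range (n + 1), (n.choose k : F) * (α ^ k * β ^ (n - k)) * x ^ (m + k) := by
    intro x
    rw [add_pow, Finset.mul_sum]
    apply Finset.sum_congr rfl
    intro k hk
    rw [mul_pow, pow_add]
    ring
  rw [Finset.sum_congr rfl fun x _ => hexp x, Finset.sum_comm]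
  have hpull : ∀ k ∈ Finset.range (n + 1),
      ∑ x : F, (n.choose k : F) * (α ^ k * β ^ (n - k)) * x ^ (m + k) =
      (if Shadow2 k n then 1 else 0) * (α ^ k * β ^ (n - k)) *
        (if m + k = q - 1 ∨ m + k = 2 * (q - 1) then 1 else 0) := by
    intro k hk
    rw [← Finset.mul_sum, sum_pow_full hF hq2 _ (by rw [Finset.mem_range] at hk; omega),
      cast_choose_char_two]
  rw [Finset.sum_congr rfl hpull]
  by_cases hm1 : m = q - 1
  · by_cases hn1 : n = q - 1
    · rw [if_neg (by tauto)]
      rw [Finset.sum_eq_add_of_mem 0 (q - 1) (by simp) (by rw [Finset.mem_range]; omega)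
        (by omega) ?_]
      · have e1 : m + 0 = q - 1 ∨ m + 0 = 2 * (q - 1) := by omega
        have e2 : m + (q - 1) = q - 1 ∨ m + (q - 1) = 2 * (q - 1) := by omega
        rw [if_pos (shadow2_zero n), if_pos (show Shadow2 (q - 1) n by subst hn1; exact fun i h => h),
          if_pos e1, if_pos e2]
        subst hn1
        simp only [Nat.sub_zero, Nat.sub_self, pow_zero, one_mul, mul_one, hαq, hβq]
        exact CharTwo.add_self_eq_zero 1
      · intro c hc hcc
        rw [Finset.mem_range] at hc
        have : ¬(m + c = q - 1 ∨ m + c = 2 * (q - 1)) := by omega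
        rw [if_neg this, mul_zero]
    · rw [if_pos ⟨by rw [hm1, Nat.sub_self]; exact shadow2_zero n, by tauto⟩]
      rw [Finset.sum_eq_single_of_mem 0 (by simp) ?_]
      · have e1 : m + 0 = q - 1 ∨ m + 0 = 2 * (q - 1) := by omega
        rw [if_pos (shadow2_zero n), if_pos e1]
        rw [hm1, Nat.sub_self]
        simp
      · intro k hk hk0
        rw [Finset.mem_range] at hk
        have : ¬(m + k = q - 1 ∨ m + k = 2 * (q - 1)) := by omega
        rw [if_neg this, mul_zero]
  · have hmlt : m < q - 1 := by omega
    by_cases hk0n : q - 1 - m ≤ n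
    · rw [Finset.sum_eq_single_of_mem (q - 1 - m) (by rw [Finset.mem_range]; omega) ?_]
      · have e1 : m + (q - 1 - m) = q - 1 ∨ m + (q - 1 - m) = 2 * (q - 1) := by omega
        rw [if_pos e1]
        by_cases hsh : Shadow2 (q - 1 - m) n
        · rw [if_pos hsh, if_pos ⟨hsh, by tauto⟩]; ring
        · rw [if_neg hsh, if_neg (fun hh => hsh hh.1)]; simp
      · intro k hk hkne
        rw [Finset.mem_range] at hk
        have : ¬(m + k = q - 1 ∨ m + k = 2 * (q - 1)) := by omega
        rw [if_neg this, mul_zero]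
    · rw [if_neg (by intro h; exact hk0n (Shadow2.le h.1))]
      apply Finset.sum_eq_zero
      intro k hk
      rw [Finset.mem_range] at hk
      have : ¬(m + k = q - 1 ∨ m + k = 2 * (q - 1)) := by omega
      rw [if_neg this, mul_zero]

lemma eST_eq (s t q : ℕ) : eST s t q = (EsetST s t q).card := rfl

def GoodP (q : ℕ) (p : Fin q × Fin q) : Prop :=
  Shadow2 (q - 1 - (p.1 : ℕ)) (p.2 : ℕ) ∧ ¬((p.1 : ℕ) = q - 1 ∧ (p.2 : ℕ) = q - 1)

def ClsP (s t q : ℕ) (p : Fin q × Fin q) : ℕ × ℕ :=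
  ((p.1 : ℕ) % s, ((p.2 : ℕ) - (q - 1 - (p.1 : ℕ))) % t)

noncomputable def LamMap (F : Type*) [Field F] (s t q : ℕ) :
    ((Fin q × Fin q) → F) →ₗ[F] (↥(EsetST s t q) → F) where
  toFun c e := ∑ p ∈ Finset.univ.filter (fun p => GoodP q p ∧ ClsP s t q p = (e : ℕ × ℕ)), c p
  map_add' c d := by funext e; exact Finset.sum_add_distrib
  map_smul' r c := by funext e; simp [Finset.mul_sum]

noncomputable def dexpP (q : ℕ) (p : Fin q × Fin q) : Fin 2 →₀ ℕ :=
  Finsupp.single 0 (p.1 : ℕ) + Finsupp.single 1 (p.2 : ℕ)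

lemma dexpP_zero {q : ℕ} (p : Fin q × Fin q) : dexpP q p 0 = (p.1 : ℕ) := by
  simp [dexpP, Finsupp.single_apply]

lemma dexpP_one {q : ℕ} (p : Fin q × Fin q) : dexpP q p 1 = (p.2 : ℕ) := by
  simp [dexpP, Finsupp.single_apply]

noncomputable def phiMap (F : Type*) [Field F] (q : ℕ) :
    ((Fin q × Fin q) → F) →ₗ[F] MvPolynomial (Fin 2) F where
  toFun c := ∑ p : Fin q × Fin q, MvPolynomial.monomial (dexpP q p) (c p)
  map_add' c d := by
    rw [← Finset.sum_add_distrib]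
    exact Finset.sum_congr rfl fun p _ => map_add _ _ _
  map_smul' r c := by
    rw [RingHom.id_apply, Finset.smul_sum]
    refine Finset.sum_congr rfl fun p _ => ?_
    rw [Pi.smul_apply, map_smul]

lemma coeff_phiMap {F : Type*} [Field F] {q : ℕ} (c : (Fin q × Fin q) → F) (p : Fin q × Fin q) :
    MvPolynomial.coeff (dexpP q p) (phiMap F q c) = c p := by
  show MvPolynomial.coeff (dexpP q p) (∑ p' : Fin q × Fin q, MvPolynomial.monomial (dexpP q p') (c p')) = c p
  rw [MvPolynomial.coeff_sum]
  rw [Finset.sum_eq_single_of_mem p (Finset.mem_univ p)]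
  · rw [MvPolynomial.coeff_monomial, if_pos rfl]
  · intro b _ hbp
    rw [MvPolynomial.coeff_monomial, if_neg]
    intro heq
    apply hbp
    have h0 := congrArg (fun d => d 0) heq
    have h1 := congrArg (fun d => d 1) heq
    simp only [dexpP_zero, dexpP_one] at h0 h1
    exact Prod.ext (Fin.ext h0) (Fin.ext h1)

lemma phiMap_injective {F : Type*} [Field F] {q : ℕ} : Function.Injective (phiMap F q) := by
  intro c d h
  funext p
  rw [← coeff_phiMap c p, ← coeff_phiMap d p, h]

/-- Dimension lower bound for the partial lift `F_{s,t}`: there are at least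
`q² - e(s,t)` linearly independent bivariate polynomials of degree at most
`q - 1` in each variable whose restriction to every line `L(T) = (T, αT + β)`
with `α ∈ G_s`, `β ∈ G_t` has degree `< q - 1`. -/
theorem partial_lift_dimension (ℓ : ℕ) (F : Type*) [Field F] [Fintype F]
    (hF : Fintype.card F = 2 ^ ℓ) (q : ℕ) (hq : q = 2 ^ ℓ)
    (s t : ℕ) (hs : s ∣ q - 1) (ht : t ∣ q - 1) :
    ∃ v : Fin (q ^ 2 - eST s t q) → MvPolynomial (Fin 2) F,
      LinearIndependent F v ∧
      ∀ k, (∀ i : Fin 2, (v k).degreeOf i ≤ q - 1) ∧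
        ∀ α β : F, α ^ s = 1 → β ^ t = 1 →
          ((MvPolynomial.aeval
              ![(X : F[X]), C α * X + C β] (v k) : F[X]) %ₘ (X ^ q - X)).degree
            < ((q - 1 : ℕ) : WithBot ℕ) := by
  -- dispose of ℓ = 0
  rcases Nat.eq_zero_or_pos ℓ with hℓ0 | hℓpos
  · exfalso
    have h2 : 1 < Fintype.card F := Fintype.one_lt_card
    rw [hF, hℓ0] at h2
    simp at h2
  have hq2 : 2 ≤ q := by
    have : (2 : ℕ) ^ 1 ≤ 2 ^ ℓ := Nat.pow_le_pow_right (by norm_num) hℓpos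
    omega
  have hspos : 0 < s := by
    rcases Nat.eq_zero_or_pos s with h | h
    · rw [h] at hs; have := Nat.zero_dvd.mp hs; omega
    · exact h
  have htpos : 0 < t := by
    rcases Nat.eq_zero_or_pos t with h | h
    · rw [h] at ht; have := Nat.zero_dvd.mp ht; omega
    · exact h
  have hqF : Fintype.card F = q := by rw [hF, hq]
  -- characteristic 2
  have hchar : CharP F 2 := by
    obtain ⟨p, hp⟩ := CharP.exists F
    haveI := hp
    obtain ⟨n, hpprime, hcard⟩ := FiniteField.card F p
    have hp2 : p = 2 := by
      have hd : p ∣ 2 ^ ℓ := by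
        rw [← hF, hcard]
        exact dvd_pow_self p (by positivity)
      exact (Nat.prime_dvd_prime_iff_eq hpprime Nat.prime_two).mp
        (hpprime.dvd_of_dvd_pow hd)
    rwa [hp2] at hp
  haveI := hchar
  -- linear algebra setup
  have hmapsto : ∀ p ∈ Finset.univ.filter (GoodP q), ClsP s t q p ∈ EsetST s t q := by
    intro p hp
    rw [Finset.mem_filter] at hp
    obtain ⟨-, hsh, hne⟩ := hp
    rw [EsetST, Finset.mem_filter, Finset.mem_product, Finset.mem_range, Finset.mem_range]
    refine ⟨⟨Nat.mod_lt _ hspos, Nat.mod_lt _ htpos⟩, (p.1 : ℕ), p.1.isLt,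
      (p.2 : ℕ) - (q - 1 - (p.1 : ℕ)), by have := p.2.isLt; omega, rfl, rfl, ?_⟩
    have hp2ℓ : (p.2 : ℕ) < 2 ^ ℓ := by rw [← hq]; exact p.2.isLt
    have hcompl := shadow2_sub_compl hsh hp2ℓ
    rw [← hq] at hcompl
    have hp1 : q - 1 - (q - 1 - (p.1 : ℕ)) = (p.1 : ℕ) := by have := p.1.isLt; omega
    rwa [hp1] at hcompl
  set Λ := LamMap F s t q with hΛ
  have hVrank : Module.finrank F ((Fin q × Fin q) → F) = q ^ 2 := by
    rw [Module.finrank_pi, Fintype.card_prod, Fintype.card_fin, pow_two]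
  have hrk := LinearMap.finrank_range_add_finrank_ker Λ
  have hrle : Module.finrank F ↥(LinearMap.range Λ) ≤ (EsetST s t q).card := by
    have h1 := Submodule.finrank_le (LinearMap.range Λ)
    rwa [Module.finrank_pi, Fintype.card_coe] at h1
  have hkge : q ^ 2 - eST s t q ≤ Module.finrank F ↥(LinearMap.ker Λ) := by
    rw [eST_eq]
    rw [hVrank] at hrk
    omega
  set K := LinearMap.ker Λ with hK
  let b := Module.finBasis F ↥K
  let ψ : ↥K →ₗ[F] MvPolynomial (Fin 2) F := (phiMap F q).comp K.subtype
  have hψker : LinearMap.ker ψ = ⊥ :=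
    LinearMap.ker_eq_bot.mpr (phiMap_injective.comp (Submodule.injective_subtype K))
  refine ⟨fun k => ψ (b (Fin.castLE hkge k)), ?_, ?_⟩
  · exact ((b.linearIndependent.comp _ (Fin.castLE_injective hkge)).map' ψ hψker)
  intro k
  set cK := b (Fin.castLE hkge k) with hcK
  set c : (Fin q × Fin q) → F := (cK : (Fin q × Fin q) → F) with hc
  have hcker : Λ c = 0 := LinearMap.mem_ker.mp cK.2
  have hvk : ψ cK = phiMap F q c := rfl
  constructor
  · -- degree bound
    intro i
    show MvPolynomial.degreeOf i (ψ cK) ≤ q - 1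
    rw [hvk, MvPolynomial.degreeOf_le_iff]
    intro d hd
    have hd' : d ∈ (∑ p : Fin q × Fin q, MvPolynomial.monomial (dexpP q p) (c p)).support := hd
    have hsub := MvPolynomial.support_sum hd'
    rw [Finset.mem_biUnion] at hsub
    obtain ⟨p, -, hp⟩ := hsub
    have hdp : d = dexpP q p := by
      have := MvPolynomial.support_monomial (s := dexpP q p) (a := c p) ▸ hp
      split_ifs at this with h
      · simp at this
      · rwa [Finset.mem_singleton] at this
    subst hdp
    fin_cases i
    · show dexpP q p 0 ≤ q - 1
      rw [dexpP_zero]; have := p.1.isLt; omega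
    · show dexpP q p 1 ≤ q - 1
      rw [dexpP_one]; have := p.2.isLt; omega
  · -- restriction degree
    intro α β hα hβ
    show ((MvPolynomial.aeval ![(X : F[X]), C α * X + C β] (ψ cK) : F[X]) %ₘ (X ^ q - X)).degree
      < ((q - 1 : ℕ) : WithBot ℕ)
    rw [hvk]
    set g : Fin 2 → F[X] := ![(X : F[X]), C α * X + C β] with hg
    set P : F[X] := MvPolynomial.aeval g (phiMap F q c) with hP
    have hmonic : (X ^ q - X : F[X]).Monic := by
      apply monic_X_pow_sub
      rw [degree_X]
      exact_mod_cast (by omega : 1 < q)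
    have hdegXq : (X ^ q - X : F[X]).degree = (q : WithBot ℕ) := by
      rw [degree_sub_eq_left_of_degree_lt, degree_X_pow]
      rw [degree_X_pow, degree_X]
      exact_mod_cast (by omega : 1 < q)
    set r : F[X] := P %ₘ (X ^ q - X) with hr
    have hdegr : r.degree < (q : WithBot ℕ) := by
      rw [hr, ← hdegXq]
      exact degree_modByMonic_lt P hmonic
    -- pointwise evaluation of P
    have hPeval : ∀ x : F, Polynomial.eval x P =
        ∑ p : Fin q × Fin q, c p * (x ^ (p.1 : ℕ) * (α * x + β) ^ (p.2 : ℕ)) := by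
      intro x
      have hPsum : P = ∑ p : Fin q × Fin q,
          (C (c p) * (X ^ (p.1 : ℕ) * (C α * X + C β) ^ (p.2 : ℕ)) : F[X]) := by
        rw [hP]
        show MvPolynomial.aeval g (∑ p : Fin q × Fin q, MvPolynomial.monomial (dexpP q p) (c p)) = _
        rw [map_sum]
        refine Finset.sum_congr rfl fun p _ => ?_
        rw [MvPolynomial.aeval_monomial]
        have hprod : ((dexpP q p).prod fun i k => g i ^ k) =
            X ^ (p.1 : ℕ) * (C α * X + C β) ^ (p.2 : ℕ) := by
          rw [Finsupp.prod_pow, Fin.prod_univ_two, dexpP_zero, dexpP_one]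
          simp [hg]
        rw [hprod]
        simp [Polynomial.algebraMap_eq]
      rw [hPsum, Polynomial.eval_finset_sum]
      refine Finset.sum_congr rfl fun p _ => ?_
      simp
    -- evaluation of r agrees with P
    have hreval : ∀ x : F, Polynomial.eval x r = Polynomial.eval x P := by
      intro x
      rw [hr, modByMonic_eq_sub_mul_div P (X ^ q - X)]
      have hxq : x ^ q = x := by
        rw [← hqF]; exact FiniteField.pow_card x
      simp [hxq]
    -- the sum over F of P vanishes
    have hsum0 : ∑ x : F, Polynomial.eval x P = 0 := by
      rw [Finset.sum_congr rfl fun x _ => hPeval x, Finset.sum_comm]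
      have hterm : ∀ p : Fin q × Fin q,
          ∑ x : F, c p * (x ^ (p.1 : ℕ) * (α * x + β) ^ (p.2 : ℕ)) =
          if GoodP q p then
            c p * (α ^ (q - 1 - (p.1 : ℕ)) * β ^ ((p.2 : ℕ) - (q - 1 - (p.1 : ℕ)))) else 0 := by
        intro p
        rw [← Finset.mul_sum, S_eval hqF hq2 hs ht α β hα hβ _ _ p.1.isLt p.2.isLt]
        rw [GoodP]
        split_ifs with h
        · rfl
        · rw [mul_zero]
      rw [Finset.sum_congr rfl fun p _ => hterm p]
      rw [← Finset.sum_filter]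
      rw [← Finset.sum_fiberwise_of_maps_to hmapsto]
      apply Finset.sum_eq_zero
      intro y hy
      have hconst : ∀ p ∈ (Finset.univ.filter (GoodP q)).filter (fun p => ClsP s t q p = y),
          c p * (α ^ (q - 1 - (p.1 : ℕ)) * β ^ ((p.2 : ℕ) - (q - 1 - (p.1 : ℕ)))) =
          c p * (α ^ (q - 1 - y.1) * β ^ y.2) := by
        intro p hp
        rw [Finset.mem_filter] at hp
        obtain ⟨-, hcls⟩ := hp
        have hy1 : (p.1 : ℕ) % s = y.1 := congrArg Prod.fst hcls
        have hy2 : ((p.2 : ℕ) - (q - 1 - (p.1 : ℕ))) % t = y.2 := congrArg Prod.snd hcls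
        congr 1
        have hαeq : α ^ (q - 1 - (p.1 : ℕ)) = α ^ (q - 1 - y.1) := by
          have hdm := Nat.div_add_mod (p.1 : ℕ) s
          set SD := s * ((p.1 : ℕ) / s) with hSD
          have hple : (p.1 : ℕ) ≤ q - 1 := by have := p.1.isLt; omega
          have h1 : q - 1 - y.1 = (q - 1 - (p.1 : ℕ)) + SD := by omega
          rw [h1, pow_add, hSD, pow_mul, hα, one_pow, mul_one]
        have hβeq : β ^ ((p.2 : ℕ) - (q - 1 - (p.1 : ℕ))) = β ^ y.2 := by
          conv_lhs => rw [← Nat.div_add_mod ((p.2 : ℕ) - (q - 1 - (p.1 : ℕ))) t]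
          rw [hy2, pow_add, pow_mul, hβ, one_pow, one_mul]
        rw [hαeq, hβeq]
      rw [Finset.sum_congr rfl hconst, ← Finset.sum_mul]
      have hzero : ∑ p ∈ (Finset.univ.filter (GoodP q)).filter (fun p => ClsP s t q p = y),
          c p = 0 := by
        have := congrFun hcker ⟨y, hy⟩
        rw [Finset.filter_filter]
        exact this
      rw [hzero, zero_mul]
    -- coefficient q-1 of r vanishes
    have hcoeffr : r.coeff (q - 1) = 0 := by
      by_cases hr0 : r = 0
      · simp [hr0]
      · have hnat : r.natDegree < q := (natDegree_lt_iff_degree_lt hr0).mpr hdegr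
        have h2 : ∑ x : F, Polynomial.eval x r = r.coeff (q - 1) := by
          rw [Finset.sum_congr rfl fun x _ => eval_eq_sum_range' hnat x, Finset.sum_comm]
          have hterm : ∀ e ∈ Finset.range q,
              ∑ x : F, r.coeff e * x ^ e = r.coeff e * (if e = q - 1 then 1 else 0) := by
            intro e he
            rw [← Finset.mul_sum, sum_pow_lt hqF hq2 e (Finset.mem_range.mp he)]
          rw [Finset.sum_congr rfl hterm]
          rw [Finset.sum_eq_single_of_mem (q - 1) (Finset.mem_range.mpr (by omega))]
          · rw [if_pos rfl, mul_one]
          · intro e _ hne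
            rw [if_neg hne, mul_zero]
        rw [← h2, Finset.sum_congr rfl fun x _ => hreval x]
        exact hsum0
    -- conclude
    rw [degree_lt_iff_coeff_zero]
    intro mm hmm
    rcases eq_or_lt_of_le hmm with heq | hlt
    · rw [← heq]; exact hcoeffr
    · exact (degree_lt_iff_coeff_zero r q).mp hdegr mm (by omega)
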